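/- Let G be a locally compact Hausdorff topological group that is compactly presented. Then for every compact generating subset S of G, the group G is boundedly presented by S. -/

import Mathlib

open scoped Pointwise

/-- A group `G` is *boundedly presented* by a subset `S ⊆ G` if there are an integer `n` and a
set `R` of words of length at most `n` in the letters `S ∪ S⁻¹`, each representing the identity
in `G`, such that the canonical homomorphism from the quotient of the free group on `S` by the
normal closure of `R` onto `G` is an isomorphism. -/
def BoundedlyPresentedBy (G : Type*) [Group G] (S : Set G) : Prop :=
  ∃ (n : ℕ) (R : Set (FreeGroup S)),
    (∀ r ∈ R, ∃ w : List (S × Bool), FreeGroup.mk w = r ∧ w.length ≤ n) ∧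
    Function.Surjective (FreeGroup.lift (fun s : S => (s : G))) ∧
    MonoidHom.ker (FreeGroup.lift (fun s : S => (s : G))) = Subgroup.normalClosure R

/-- A topological group is *compactly presented* if it is boundedly presented by some compact
subset. -/
def CompactlyPresented (G : Type*) [Group G] [TopologicalSpace G] : Prop :=
  ∃ S : Set G, IsCompact S ∧ BoundedlyPresentedBy G S

lemma exists_pow_cover {G : Type*} [Group G] [TopologicalSpace G]
    [IsTopologicalGroup G] [T2Space G] [LocallyCompactSpace G]
    {S K : Set G} (hS : IsCompact S) (hgen : Subgroup.closure S = ⊤)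
    (hK : IsCompact K) : ∃ n : ℕ, K ⊆ (S ∪ S⁻¹ ∪ {1}) ^ n := by
  set V : Set G := S ∪ S⁻¹ ∪ {1} with hV
  have h1V : (1 : G) ∈ V := by simp [hV]
  have hVsymm : V⁻¹ = V := by
    ext x
    simp only [hV, Set.mem_inv, Set.mem_union, Set.mem_singleton_iff, inv_eq_one,
      inv_inv]
    tauto
  have hVc : IsCompact V := (hS.union hS.inv).union isCompact_singleton
  have hVpow : ∀ n : ℕ, IsCompact (V ^ n) := by
    intro n
    induction n with
    | zero => rw [pow_zero, ← Set.singleton_one]; exact isCompact_singleton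
    | succ n ih => rw [pow_succ]; exact ih.mul hVc
  have hpowsymm : ∀ n : ℕ, (V ^ n)⁻¹ = V ^ n := by
    intro n; rw [← inv_pow, hVsymm]
  have hcover : ∀ x : G, ∃ n : ℕ, x ∈ V ^ n := by
    intro x
    have hx : x ∈ Subgroup.closure S := hgen ▸ Subgroup.mem_top x
    induction hx using Subgroup.closure_induction with
    | mem y hy => exact ⟨1, by rw [pow_one]; exact Or.inl (Or.inl hy)⟩
    | one => exact ⟨0, by simp⟩
    | mul a b _ _ ha hb =>
        obtain ⟨m, hm⟩ := ha; obtain ⟨k, hk⟩ := hb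
        exact ⟨m + k, by rw [pow_add]; exact Set.mul_mem_mul hm hk⟩
    | inv a _ ha =>
        obtain ⟨m, hm⟩ := ha
        refine ⟨m, ?_⟩
        rw [← hpowsymm m]
        simpa using hm
  obtain ⟨n₀, x₀, hx₀⟩ :=
    nonempty_interior_of_iUnion_of_closed (fun n => (hVpow n).isClosed)
      (by ext x; simpa using hcover x)
  have hx₀V : x₀ ∈ V ^ n₀ := interior_subset hx₀
  have hx₀inv : x₀⁻¹ ∈ V ^ n₀ := by rw [← hpowsymm n₀]; simpa using hx₀V
  set U : Set G := x₀⁻¹ • interior (V ^ n₀) with hU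
  have hUopen : IsOpen U := isOpen_interior.smul _
  have h1U : (1 : G) ∈ U := ⟨x₀, hx₀, by simp⟩
  have hUsub : U ⊆ V ^ (2 * n₀) := by
    rintro _ ⟨z, hz, rfl⟩
    rw [two_mul, pow_add]
    exact Set.mul_mem_mul hx₀inv (interior_subset hz)
  obtain ⟨t, htK, hcov⟩ := hK.elim_nhds_subcover (fun g => g • U)
    (fun g _ => (hUopen.smul g).mem_nhds ⟨1, h1U, by simp⟩)
  classical
  set cn : G → ℕ := fun g => Classical.choose (hcover g) with hcn
  refine ⟨t.sup cn + 2 * n₀, fun x hx => ?_⟩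
  obtain ⟨g, hgt, hgx⟩ := Set.mem_iUnion₂.1 (hcov hx)
  obtain ⟨u, hu, rfl⟩ := hgx
  rw [pow_add]
  exact Set.mul_mem_mul
    (Set.pow_subset_pow_right h1V (Finset.le_sup hgt) (Classical.choose_spec (hcover g)))
    (hUsub hu)

namespace FreeGroup

/-- single letter -/
lemma mk_single_true {α : Type*} (a : α) : mk [(a, true)] = of a := rfl

lemma mk_single_false {α : Type*} (a : α) : mk [(a, false)] = (of a)⁻¹ := by
  rw [← mk_single_true, inv_mk]; rfl

end FreeGroup

/-- Every element of `(S ∪ S⁻¹ ∪ {1}) ^ n` is represented by a word of length at most `n`. -/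
lemma exists_word_of_mem_pow {G : Type*} [Group G] {S : Set G} {x : G} :
    ∀ {n : ℕ}, x ∈ (S ∪ S⁻¹ ∪ {1}) ^ n →
      ∃ w : List (S × Bool), w.length ≤ n ∧
        FreeGroup.lift (fun s : S => (s : G)) (FreeGroup.mk w) = x := by
  intro n
  induction n generalizing x with
  | zero =>
      intro hx
      rw [pow_zero, ← Set.singleton_one, Set.mem_singleton_iff] at hx
      exact ⟨[], by simp, by simp [← FreeGroup.one_eq_mk, hx]⟩
  | succ n ih =>
      intro hx
      rw [pow_succ] at hx
      obtain ⟨y, hy, v, hv, rfl⟩ := Set.mem_mul.1 hx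
      obtain ⟨w, hwlen, hwval⟩ := ih hy
      rcases hv with (hv | hv) | hv
      · refine ⟨w ++ [(⟨v, hv⟩, true)], by simpa using hwlen, ?_⟩
        rw [← FreeGroup.mul_mk, map_mul, hwval, FreeGroup.mk_single_true,
          FreeGroup.lift_apply_of]
      · refine ⟨w ++ [(⟨v⁻¹, Set.mem_inv.1 hv⟩, false)], by simpa using hwlen, ?_⟩
        rw [← FreeGroup.mul_mk, map_mul, hwval, FreeGroup.mk_single_false,
          map_inv, FreeGroup.lift_apply_of]
        simp
      · obtain rfl : v = (1 : G) := hv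
        exact ⟨w, hwlen.trans (Nat.le_succ n), by simpa using hwval⟩

/-- If a homomorphism sends generators to elements with words of length at most `k`,
then the image of `mk u` has a word of length at most `k * u.length`. -/
lemma exists_word_map {α β : Type*} (f : α → FreeGroup β) {k : ℕ}
    (hf : ∀ a : α, ∃ w : List (β × Bool), FreeGroup.mk w = f a ∧ w.length ≤ k) :
    ∀ u : List (α × Bool),
      ∃ w : List (β × Bool), FreeGroup.mk w = FreeGroup.lift f (FreeGroup.mk u) ∧
        w.length ≤ k * u.length := by
  intro u
  induction u with
  | nil => exact ⟨[], by simp [← FreeGroup.one_eq_mk], by simp⟩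
  | cons p u ih =>
      obtain ⟨a, b⟩ := p
      obtain ⟨w, hw, hwlen⟩ := ih
      obtain ⟨wa, hwa, hwalen⟩ := hf a
      have hmk : FreeGroup.mk ((a, b) :: u) = FreeGroup.mk [(a, b)] * FreeGroup.mk u := by
        rw [FreeGroup.mul_mk]; rfl
      cases b with
      | false =>
          refine ⟨FreeGroup.invRev wa ++ w, ?_, ?_⟩
          · rw [← FreeGroup.mul_mk, hmk, map_mul, ← hw, ← FreeGroup.inv_mk, hwa,
              FreeGroup.mk_single_false, map_inv, FreeGroup.lift_apply_of]
          · have := FreeGroup.invRev_length (L₁ := wa)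
            simp only [List.length_append, List.length_cons, Nat.mul_succ, this]
            omega
      | true =>
          refine ⟨wa ++ w, ?_, ?_⟩
          · rw [← FreeGroup.mul_mk, hmk, map_mul, ← hw, hwa,
              FreeGroup.mk_single_true, FreeGroup.lift_apply_of]
          · simp only [List.length_append, List.length_cons, Nat.mul_succ]
            omega

/-- a compactly presented locally compact group is boundedly presented by each of
its compact generating subsets. -/
theorem boundedlyPresentedBy_of_compactlyPresented {G : Type*} [Group G] [TopologicalSpace G]
    [IsTopologicalGroup G] [T2Space G] [LocallyCompactSpace G]
    (hG : CompactlyPresented G) (S : Set G) (hS : IsCompact S)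
    (hgen : Subgroup.closure S = ⊤) :
    BoundedlyPresentedBy G S := by
  classical
  obtain ⟨T, hT, n, RT, hRT, hsurjT, hkerT⟩ := hG
  set liftS : FreeGroup S →* G := FreeGroup.lift (fun s : S => (s : G)) with hliftS
  set liftT : FreeGroup T →* G := FreeGroup.lift (fun t : T => (t : G)) with hliftT
  have hgenT : Subgroup.closure T = ⊤ := by
    have := FreeGroup.range_lift_eq_closure (f := fun t : T => (t : G))
    rw [Subtype.range_coe] at this
    rw [← this]
    exact MonoidHom.range_eq_top.2 hsurjT
  obtain ⟨k, hk⟩ := exists_pow_cover hS hgen hT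
  obtain ⟨m, hm⟩ := exists_pow_cover hT hgenT hS
  choose fw hfwlen hfwval using fun t : T => exists_word_of_mem_pow (hk t.2)
  choose uw huwlen huwval using fun s : S => exists_word_of_mem_pow (hm s.2)
  set f : T → FreeGroup S := fun t => FreeGroup.mk (fw t) with hf
  set φ : FreeGroup T →* FreeGroup S := FreeGroup.lift f with hφ
  set us : S → FreeGroup T := fun s => FreeGroup.mk (uw s) with hus
  set θ : FreeGroup S →* FreeGroup T := FreeGroup.lift us with hθ
  have hSφ : liftS.comp φ = liftT := by
    apply FreeGroup.ext_hom
    intro t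
    simp only [MonoidHom.comp_apply, hφ, FreeGroup.lift_apply_of, hf]
    rw [hfwval t, hliftT, FreeGroup.lift_apply_of]
  have hTθ : liftT.comp θ = liftS := by
    apply FreeGroup.ext_hom
    intro s
    simp only [MonoidHom.comp_apply, hθ, FreeGroup.lift_apply_of, hus]
    rw [huwval s, hliftS, FreeGroup.lift_apply_of]
  set RS : Set (FreeGroup S) :=
    φ '' RT ∪ Set.range (fun s : S => (FreeGroup.of s)⁻¹ * φ (us s)) with hRS
  have hsurjS : Function.Surjective liftS := by
    rw [← MonoidHom.range_eq_top, hliftS, FreeGroup.range_lift_eq_closure,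
      Subtype.range_coe, hgen]
  refine ⟨max (k * n) (1 + k * m), RS, ?_, hsurjS, ?_⟩
  · rintro r (⟨r', hr', rfl⟩ | ⟨s, rfl⟩)
    · obtain ⟨u, hu, hulen⟩ := hRT r' hr'
      obtain ⟨w, hw, hwlen⟩ := exists_word_map f (fun a => ⟨fw a, rfl, hfwlen a⟩) u
      refine ⟨w, by rw [hw, hu], ?_⟩
      exact le_max_of_le_left (hwlen.trans (Nat.mul_le_mul_left k hulen))
    · obtain ⟨w, hw, hwlen⟩ := exists_word_map f (fun a => ⟨fw a, rfl, hfwlen a⟩) (uw s)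
      refine ⟨(s, false) :: w, ?_, ?_⟩
      · rw [show ((s, false) :: w : List (S × Bool)) = [(s, false)] ++ w from rfl,
          ← FreeGroup.mul_mk, FreeGroup.mk_single_false, hw]
      · refine le_max_of_le_right ?_
        have := hwlen.trans (Nat.mul_le_mul_left k (huwlen s))
        simp only [List.length_cons]
        omega
  · have hRSker : RS ⊆ (MonoidHom.ker liftS : Set (FreeGroup S)) := by
      rintro r (⟨r', hr', rfl⟩ | ⟨s, rfl⟩)
      · have : r' ∈ MonoidHom.ker liftT := by
          rw [hkerT]; exact Subgroup.subset_normalClosure hr'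
        have := MonoidHom.mem_ker.1 this
        rw [SetLike.mem_coe, MonoidHom.mem_ker, ← MonoidHom.comp_apply, hSφ, this]
      · rw [SetLike.mem_coe, MonoidHom.mem_ker, map_mul, map_inv, ← MonoidHom.comp_apply, hSφ]
        have h1 : liftT (us s) = (s : G) := by
          rw [hus, huwval s]
        have h2 : liftS (FreeGroup.of s) = (s : G) := by
          rw [hliftS, FreeGroup.lift_apply_of]
        rw [h1, h2, inv_mul_cancel]
    apply le_antisymm
    · intro x hx
      set π : FreeGroup S →* FreeGroup S ⧸ Subgroup.normalClosure RS :=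
        QuotientGroup.mk' _ with hπ
      have hkerπ : MonoidHom.ker π = Subgroup.normalClosure RS := QuotientGroup.ker_mk' _
      have hπRS : ∀ r ∈ RS, π r = 1 := fun r hr => by
        rw [← MonoidHom.mem_ker, hkerπ]
        exact Subgroup.subset_normalClosure hr
      have hNT : Subgroup.normalClosure RT ≤ MonoidHom.ker (π.comp φ) := by
        apply Subgroup.normalClosure_le_normal
        intro r hr
        rw [SetLike.mem_coe, MonoidHom.mem_ker, MonoidHom.comp_apply]
        exact hπRS _ (Or.inl ⟨r, hr, rfl⟩)
      have hθx : θ x ∈ Subgroup.normalClosure RT := by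
        rw [← hkerT, MonoidHom.mem_ker, ← MonoidHom.comp_apply, hTθ]
        exact hx
      have hπφθ : (π.comp φ).comp θ = π := by
        apply FreeGroup.ext_hom
        intro s
        simp only [MonoidHom.comp_apply, hθ, FreeGroup.lift_apply_of]
        have := hπRS _ (Or.inr ⟨s, rfl⟩)
        rw [map_mul, map_inv] at this
        exact (inv_mul_eq_one.1 this).symm
      have : π x = 1 := by
        rw [← hπφθ, MonoidHom.comp_apply]
        exact hNT hθx
      rw [← hkerπ]
      exact MonoidHom.mem_ker.2 this
    · exact Subgroup.normalClosure_le_normal hRSker
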